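/- Let u₀ > 1 and let x < y with 0 < y - x < π/2. Suppose u(x), u(y) are real numbers with u₀ ≤ u(x) ≤ u(y) and u(x) ≥ u(y)·cos(y-x). Then arcoth(u(x)) - arcoth(u(y)) ≤ 4(y-x)² · u(x)/(u(x)² - 1) ≤ 4(y-x)² · u₀/(u₀² - 1). -/
import Mathlib


lemma stmt_7_aux1 (t a b : ℝ) (ha : 1 < a) (hb : a ≤ b) (h : b - a ≤ b * (t ^ 2 / 2)) :
    (b - a) * (a ^ 2 - 1) ≤ 4 * t ^ 2 * a * ((a - 1) * (b + 1)) := by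
  have hE : (0:ℝ) ≤ a ^ 2 - 1 := by nlinarith
  have h_a := mul_le_mul_of_nonneg_right h hE
  have hb1 : (0:ℝ) ≤ a - 1 := by linarith
  have hb2 : (0:ℝ) ≤ 7 * a * b + 8 * a - b := by nlinarith
  have h_b : 0 ≤ t ^ 2 * ((a - 1) * (7 * a * b + 8 * a - b)) :=
    mul_nonneg (sq_nonneg t) (mul_nonneg hb1 hb2)
  nlinarith [h_a, h_b]

lemma stmt_7_aux2 (a b : ℝ) (ha : 1 < a) (hb : a ≤ b) :
    b / (b ^ 2 - 1) ≤ a / (a ^ 2 - 1) := by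
  have hE : (0:ℝ) < a ^ 2 - 1 := by nlinarith
  have hF : (0:ℝ) < b ^ 2 - 1 := by nlinarith
  rw [div_le_div_iff₀ hF hE]
  nlinarith [mul_nonneg (sub_nonneg.2 hb) (show (0:ℝ) ≤ a * b + 1 by nlinarith)]

/-- The inverse hyperbolic cotangent, for arguments `> 1`. -/
noncomputable def arcoth (t : ℝ) : ℝ := (1 / 2) * Real.log ((t + 1) / (t - 1))

/-- If `u₀ > 1`, `0 < y - x < π/2`, `u₀ ≤ u(x) ≤ u(y)` and `u(x) ≥ u(y)·cos(y-x)`, then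
`arcoth(u(x)) - arcoth(u(y)) ≤ 4(y-x)²·u(x)/(u(x)²-1) ≤ 4(y-x)²·u₀/(u₀²-1)`. -/
theorem stmt_7 (u₀ x y ux uy : ℝ) (hu₀ : 1 < u₀) (hxy : x < y) (hxy' : y - x < Real.pi / 2)
    (h1 : u₀ ≤ ux) (h2 : ux ≤ uy) (h3 : uy * Real.cos (y - x) ≤ ux) :
    arcoth ux - arcoth uy ≤ 4 * (y - x) ^ 2 * (ux / (ux ^ 2 - 1)) ∧
    4 * (y - x) ^ 2 * (ux / (ux ^ 2 - 1)) ≤ 4 * (y - x) ^ 2 * (u₀ / (u₀ ^ 2 - 1)) := by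
  have hθ : 0 < y - x := by linarith
  set θ := y - x with hθdef
  have hux1 : 1 < ux := lt_of_lt_of_le hu₀ h1
  have huy1 : 1 < uy := lt_of_lt_of_le hux1 h2
  have ha : ux - 1 ≠ 0 := ne_of_gt (by linarith)
  have hb : uy + 1 ≠ 0 := ne_of_gt (by linarith)
  have hc : uy - 1 ≠ 0 := ne_of_gt (by linarith)
  have hd : ux + 1 ≠ 0 := ne_of_gt (by linarith)
  have h1cos : 1 - Real.cos θ ≤ θ ^ 2 / 2 := by
    nlinarith [Real.one_sub_sq_div_two_le_cos (x := θ)]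
  have hA : (0:ℝ) < (ux + 1) / (ux - 1) := div_pos (by linarith) (by linarith)
  have hB : (0:ℝ) < (uy + 1) / (uy - 1) := div_pos (by linarith) (by linarith)
  set r : ℝ := ((ux + 1) * (uy - 1)) / ((ux - 1) * (uy + 1)) with hr
  have hrpos : 0 < r := div_pos (by nlinarith) (by nlinarith)
  have key : arcoth ux - arcoth uy = (1 / 2) * Real.log r := by
    unfold arcoth
    rw [← mul_sub, ← Real.log_div (ne_of_gt hA) (ne_of_gt hB)]
    congr 2
    rw [hr]
    field_simp
  have hlog : Real.log r ≤ r - 1 := Real.log_le_sub_one_of_pos hrpos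
  have hr1 : (1 / 2) * (r - 1) = (uy - ux) / ((ux - 1) * (uy + 1)) := by
    rw [hr]
    field_simp
    ring
  have hduθ : uy - ux ≤ uy * (θ ^ 2 / 2) := by
    have h' : uy - ux ≤ uy * (1 - Real.cos θ) := by nlinarith
    nlinarith
  have hD : (0:ℝ) < (ux - 1) * (uy + 1) := by nlinarith
  have hE : (0:ℝ) < ux ^ 2 - 1 := by nlinarith
  constructor
  · rw [key]
    have step1 : (1 / 2) * Real.log r ≤ (uy - ux) / ((ux - 1) * (uy + 1)) := by
      rw [← hr1]; linarith
    refine step1.trans ?_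
    have hrw : 4 * θ ^ 2 * (ux / (ux ^ 2 - 1)) = (4 * θ ^ 2 * ux) / (ux ^ 2 - 1) := by ring
    rw [hrw, div_le_div_iff₀ hD hE]
    exact stmt_7_aux1 θ ux uy hux1 h2 hduθ
  · exact mul_le_mul_of_nonneg_left (stmt_7_aux2 u₀ ux hu₀ h1) (by positivity)
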